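/- The product filter construction is lax compatible with the filter monad multiplication: for filters of filters 𝔉 ∈ FFX and 𝔊 ∈ FFY, one has (μ_X 𝔉) × (μ_Y 𝔊) ⊆ μ_{X×Y}(Fκ_{X,Y}(𝔉 × 𝔊)), where κ_{X,Y}(𝔵,𝔶) = 𝔵 × 𝔶 is the product filter map. -/
import Mathlib

universe u v

/-- Lax compatibility of the product filter with the filter-monad multiplication:
for filters of filters `𝔉` on `FX` and `𝔊` on `FY`, every member of
`(μ_X 𝔉) × (μ_Y 𝔊)` is a member of `μ_{X×Y} (Fκ_{X,Y} (𝔉 × 𝔊))`, where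
`κ_{X,Y}` is the product-filter map. -/
theorem prod_filter_lax_mul {X : Type u} {Y : Type v}
    (𝔉 : Filter (Filter X)) (𝔊 : Filter (Filter Y)) :
    ((Filter.join 𝔉) ×ˢ (Filter.join 𝔊)).sets ⊆
      (Filter.join (Filter.map (fun p : Filter X × Filter Y => p.1 ×ˢ p.2) (𝔉 ×ˢ 𝔊))).sets := by
  intro A hA
  rw [Filter.mem_sets, Filter.mem_prod_iff] at hA
  obtain ⟨S, hS, T, hT, hST⟩ := hA
  rw [Filter.mem_join] at hS hT
  rw [Filter.mem_sets, Filter.mem_join, Filter.mem_map]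
  apply Filter.mem_of_superset (Filter.prod_mem_prod hS hT)
  rintro ⟨x, y⟩ ⟨hx, hy⟩
  exact Filter.mem_of_superset (Filter.prod_mem_prod hx hy) hST
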